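/- Let H be a Hamiltonian with unique ground state Γ and let K be a (D,Δ)-AGSP for a fixed bipartite cut, meaning: KΓ = Γ; K maps the orthogonal complement of Γ into itself with ‖Kv‖² ≤ Δ‖v‖² for all v ⊥ Γ; and K has Schmidt rank at most D across the cut. If D·Δ ≤ 1/2, then there exists a product state φ = φ_L ⊗ φ_R across the cut with |⟨Γ|φ⟩| ≥ 1/√(2D). -/

import Mathlib

open Matrix


noncomputable section AGSPaux

namespace AGSP
variable {m n : ℕ}

def tp (a : EuclideanSpace ℂ (Fin m)) (b : EuclideanSpace ℂ (Fin n)) :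
    EuclideanSpace ℂ (Fin m × Fin n) := WithLp.toLp 2 (fun p => a p.1 * b p.2)

lemma tp_apply (a : EuclideanSpace ℂ (Fin m)) (b : EuclideanSpace ℂ (Fin n)) (p : Fin m × Fin n) :
    tp a b p = a p.1 * b p.2 := rfl

lemma inner_eq {ι : Type*} [Fintype ι] (x y : EuclideanSpace ℂ ι) :
    (inner ℂ x y : ℂ) = star (x : ι → ℂ) ⬝ᵥ (y : ι → ℂ) := by
  rw [EuclideanSpace.inner_eq_star_dotProduct, dotProduct_comm]

lemma esum_apply {ι κ : Type*} (s : Finset κ) (f : κ → EuclideanSpace ℂ ι) (p : ι) :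
    (∑ k ∈ s, f k) p = ∑ k ∈ s, f k p := by
  induction s using Finset.cons_induction with
  | empty => rfl
  | cons a s ha ih => rw [Finset.sum_cons, Finset.sum_cons, ← ih]; rfl

lemma inner_tp (a a' : EuclideanSpace ℂ (Fin m)) (b b' : EuclideanSpace ℂ (Fin n)) :
    (inner ℂ (tp a b) (tp a' b') : ℂ) = (inner ℂ a a' : ℂ) * (inner ℂ b b' : ℂ) := by
  simp only [PiLp.inner_apply, tp, RCLike.inner_apply, _root_.map_mul]
  rw [Finset.sum_mul_sum, Fintype.sum_prod_type]
  exact Finset.sum_congr rfl fun p _ => Finset.sum_congr rfl fun q _ => by ring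

lemma tp_sum_smul_left {d : ℕ} (c : Fin d → ℂ) (x : Fin d → EuclideanSpace ℂ (Fin m))
    (b : EuclideanSpace ℂ (Fin n)) :
    tp (∑ j, c j • x j) b = ∑ j, c j • tp (x j) b := by
  ext p
  rw [esum_apply, tp_apply, esum_apply, Finset.sum_mul]
  exact Finset.sum_congr rfl fun j _ => by
    show (c j • x j) p.1 * b p.2 = (c j • tp (x j) b) p
    simp [tp, smul_eq_mul, mul_assoc]

lemma tp_sum_smul_right {d : ℕ} (c : Fin d → ℂ) (a : EuclideanSpace ℂ (Fin m))
    (y : Fin d → EuclideanSpace ℂ (Fin n)) :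
    tp a (∑ j, c j • y j) = ∑ j, c j • tp a (y j) := by
  ext p
  rw [esum_apply, tp_apply, esum_apply, Finset.mul_sum]
  exact Finset.sum_congr rfl fun j _ => by
    show a p.1 * (c j • y j) p.2 = (c j • tp a (y j)) p
    simp [tp, smul_eq_mul]; ring

lemma norm_sum_tp {d : ℕ} (E : Fin d → EuclideanSpace ℂ (Fin m)) (hE : Orthonormal ℂ E)
    (w' : Fin d → EuclideanSpace ℂ (Fin n)) :
    ‖∑ j, tp (E j) (w' j)‖ ^ 2 = ∑ j, ‖w' j‖ ^ 2 := by
  classical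
  have h : (inner ℂ (∑ j, tp (E j) (w' j)) (∑ j, tp (E j) (w' j)) : ℂ)
      = ((∑ j, ‖w' j‖ ^ 2 : ℝ) : ℂ) := by
    rw [inner_sum]
    have : ∀ k, (inner ℂ (∑ j, tp (E j) (w' j)) (tp (E k) (w' k)) : ℂ) = (‖w' k‖:ℂ)^2 := by
      intro k
      rw [sum_inner]
      have : ∀ j, (inner ℂ (tp (E j) (w' j)) (tp (E k) (w' k)) : ℂ)
          = if j = k then (inner ℂ (w' k) (w' k) : ℂ) else 0 := by
        intro j
        rw [inner_tp, orthonormal_iff_ite.mp hE j k]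
        by_cases hjk : j = k <;> simp [hjk]
      simp_rw [this]
      rw [Finset.sum_ite_eq' Finset.univ k, if_pos (Finset.mem_univ k),
        inner_self_eq_norm_sq_to_K]
      norm_cast
    simp_rw [this]
    push_cast
    rfl
  have h2 := inner_self_eq_norm_sq (𝕜 := ℂ) (∑ j, tp (E j) (w' j))
  rw [h] at h2
  rw [← h2]
  exact RCLike.ofReal_re _

lemma bound_orthonormal {d : ℕ} (Γ : EuclideanSpace ℂ (Fin m × Fin n)) (μ : ℝ) (hμ0 : 0 ≤ μ)
    (hμ : ∀ (a : EuclideanSpace ℂ (Fin m)) (b : EuclideanSpace ℂ (Fin n)),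
      ‖a‖ = 1 → ‖b‖ = 1 → ‖(inner ℂ Γ (tp a b) : ℂ)‖ ≤ μ)
    (E : Fin d → EuclideanSpace ℂ (Fin m)) (hE : Orthonormal ℂ E)
    (w' : Fin d → EuclideanSpace ℂ (Fin n)) :
    ‖(inner ℂ Γ (∑ j, tp (E j) (w' j)) : ℂ)‖
      ≤ μ * Real.sqrt d * ‖∑ j, tp (E j) (w' j)‖ := by
  classical
  set ψ := ∑ j, tp (E j) (w' j) with hψ
  have hterm : ∀ j, ‖(inner ℂ Γ (tp (E j) (w' j)) : ℂ)‖ ≤ μ * ‖w' j‖ := by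
    intro j
    by_cases h0 : w' j = 0
    · have : tp (E j) (w' j) = 0 := by
        ext p; show E j p.1 * w' j p.2 = 0; rw [h0]; simp
      rw [this, inner_zero_right, h0]; simp
    · set r : ℝ := ‖w' j‖ with hr
      have hrpos : 0 < r := norm_pos_iff.mpr h0
      set b : EuclideanSpace ℂ (Fin n) := (r : ℂ)⁻¹ • w' j with hb
      have hbn : ‖b‖ = 1 := by
        rw [hb, norm_smul, norm_inv, Complex.norm_real, Real.norm_eq_abs,
          abs_of_pos hrpos, inv_mul_cancel₀ hrpos.ne']
      have hwb : w' j = (r : ℂ) • b := by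
        rw [hb, smul_smul, mul_inv_cancel₀ (by exact_mod_cast hrpos.ne'), one_smul]
      have htps : tp (E j) (w' j) = (r : ℂ) • tp (E j) b := by
        ext p
        show E j p.1 * w' j p.2 = ((r:ℂ) • tp (E j) b) p
        rw [hwb]
        show E j p.1 * ((r:ℂ) • b) p.2 = (r:ℂ) * (E j p.1 * b p.2)
        show E j p.1 * ((r:ℂ) * b p.2) = (r:ℂ) * (E j p.1 * b p.2)
        ring
      rw [htps, inner_smul_right, norm_mul, Complex.norm_real, Real.norm_eq_abs,
        abs_of_pos hrpos, mul_comm]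
      exact mul_le_mul_of_nonneg_right (hμ (E j) b (hE.1 j) hbn) hrpos.le
  have h1 : ‖(inner ℂ Γ ψ : ℂ)‖ ≤ μ * ∑ j, ‖w' j‖ := by
    rw [hψ, inner_sum]
    refine (norm_sum_le _ _).trans ?_
    rw [Finset.mul_sum]
    exact Finset.sum_le_sum fun j _ => hterm j
  have h2 : ∑ j, ‖w' j‖ ≤ Real.sqrt d * ‖ψ‖ := by
    have hcs := Finset.sum_mul_sq_le_sq_mul_sq Finset.univ (fun _ : Fin d => (1:ℝ))
      (fun j => ‖w' j‖)
    simp only [one_mul, one_pow] at hcs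
    have hcs2 : (∑ j, ‖w' j‖) ^ 2 ≤ (d : ℝ) * ‖ψ‖ ^ 2 := by
      rw [hψ, norm_sum_tp E hE w']
      simpa using hcs
    have hnn : 0 ≤ ∑ j, ‖w' j‖ := Finset.sum_nonneg fun j _ => norm_nonneg _
    calc ∑ j, ‖w' j‖ = Real.sqrt ((∑ j, ‖w' j‖) ^ 2) := (Real.sqrt_sq hnn).symm
      _ ≤ Real.sqrt ((d : ℝ) * ‖ψ‖ ^ 2) := Real.sqrt_le_sqrt hcs2
      _ = Real.sqrt d * ‖ψ‖ := by
          rw [Real.sqrt_mul (Nat.cast_nonneg d), Real.sqrt_sq (norm_nonneg _)]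
  calc ‖(inner ℂ Γ ψ : ℂ)‖ ≤ μ * ∑ j, ‖w' j‖ := h1
    _ ≤ μ * (Real.sqrt d * ‖ψ‖) := mul_le_mul_of_nonneg_left h2 hμ0
    _ = μ * Real.sqrt d * ‖ψ‖ := by ring

lemma key_bound (D : ℕ) (Γ : EuclideanSpace ℂ (Fin m × Fin n)) (μ : ℝ) (hμ0 : 0 ≤ μ)
    (hμ : ∀ (a : EuclideanSpace ℂ (Fin m)) (b : EuclideanSpace ℂ (Fin n)),
      ‖a‖ = 1 → ‖b‖ = 1 → ‖(inner ℂ Γ (tp a b) : ℂ)‖ ≤ μ)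
    (u : Fin D → EuclideanSpace ℂ (Fin m)) (w : Fin D → EuclideanSpace ℂ (Fin n)) :
    ‖(inner ℂ Γ (∑ i, tp (u i) (w i)) : ℂ)‖
      ≤ μ * Real.sqrt D * ‖∑ i, tp (u i) (w i)‖ := by
  classical
  set V : Submodule ℂ (EuclideanSpace ℂ (Fin m)) := Submodule.span ℂ (Set.range u) with hV
  have hfin : Module.finrank ℂ V ≤ D := by
    simpa [Set.finrank] using finrank_range_le_card (R := ℂ) u
  set d := Module.finrank ℂ V with hd
  let e : OrthonormalBasis (Fin d) ℂ V := stdOrthonormalBasis ℂ V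
  set E : Fin d → EuclideanSpace ℂ (Fin m) :=
    fun j => ((e j : V) : EuclideanSpace ℂ (Fin m)) with hEdef
  have hEon : Orthonormal ℂ E := e.orthonormal.comp_linearIsometry V.subtypeₗᵢ
  have hu : ∀ i, u i = ∑ j, (inner ℂ (E j) (u i) : ℂ) • E j := by
    intro i
    have hmem : u i ∈ V := Submodule.subset_span ⟨i, rfl⟩
    have h1 := e.sum_repr' ⟨u i, hmem⟩
    have h2 := congrArg (V.subtype) h1
    simp only [map_sum, _root_.map_smul, Submodule.subtype_apply, Submodule.coe_inner] at h2
    exact h2.symm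
  set w' : Fin d → EuclideanSpace ℂ (Fin n) :=
    fun j => ∑ i, (inner ℂ (E j) (u i) : ℂ) • w i with hw'
  have hrw : ∑ i, tp (u i) (w i) = ∑ j, tp (E j) (w' j) := by
    calc ∑ i, tp (u i) (w i)
        = ∑ i, ∑ j, (inner ℂ (E j) (u i) : ℂ) • tp (E j) (w i) := by
          refine Finset.sum_congr rfl fun i _ => ?_
          conv_lhs => rw [hu i]
          exact tp_sum_smul_left _ _ _
      _ = ∑ j, ∑ i, (inner ℂ (E j) (u i) : ℂ) • tp (E j) (w i) := Finset.sum_comm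
      _ = ∑ j, tp (E j) (w' j) :=
          Finset.sum_congr rfl fun j _ => (tp_sum_smul_right _ _ _).symm
  rw [hrw]
  refine (bound_orthonormal Γ μ hμ0 hμ E hEon w').trans ?_
  have hsq : Real.sqrt d ≤ Real.sqrt D := Real.sqrt_le_sqrt (by exact_mod_cast hfin)
  exact mul_le_mul_of_nonneg_right (mul_le_mul_of_nonneg_left hsq hμ0) (norm_nonneg _)

end AGSP
end AGSPaux

lemma agsp_arith (Dr Δ μ t s : ℝ) (hΔ : 0 ≤ Δ) (hDΔ : Dr * Δ ≤ 1/2) (hDpos : 0 < Dr)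
    (hμpos : 0 < μ) (hssq : s^2 = Dr) (hs0 : 0 ≤ s) (ht0 : 0 ≤ t)
    (hkey : μ ≤ μ * s * t) (hKφ : t^2 ≤ μ^2 + Δ) : 1/(2*Dr) ≤ μ^2 := by
  have h1 : 1 ≤ s * t := by nlinarith
  have h2 : 1 ≤ Dr * t ^ 2 := by nlinarith
  have h3 : 1 ≤ Dr * μ ^ 2 + Dr * Δ := by nlinarith
  rw [div_le_iff₀ (by positivity)]
  nlinarith

open AGSP in
set_option maxHeartbeats 1000000 in
/-- Lemma 2 of the Arad–Kitaev–Landau–Vazirani 1D area law proof: a `(D,Δ)`-AGSP with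
`D·Δ ≤ 1/2` implies the existence of a product state with overlap at least `1/√(2D)`
with the (unique) ground state `Γ`. -/
theorem agsp_implies_product_overlap (m n : ℕ) (D : ℕ) (Δ : ℝ) (hΔ : 0 ≤ Δ)
    (Γ : Fin m × Fin n → ℂ) (hΓ : star Γ ⬝ᵥ Γ = 1)
    (K : Matrix (Fin m × Fin n) (Fin m × Fin n) ℂ)
    -- ground state invariance
    (hfix : K.mulVec Γ = Γ)
    -- shrinking: K preserves Γ-orthogonality and shrinks squared norms by Δ
    (hshrink : ∀ v : Fin m × Fin n → ℂ, star Γ ⬝ᵥ v = 0 →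
      star Γ ⬝ᵥ K.mulVec v = 0 ∧
      (star (K.mulVec v) ⬝ᵥ K.mulVec v).re ≤ Δ * (star v ⬝ᵥ v).re)
    -- Schmidt rank of K across the cut is at most D
    (hrank : ∃ (Lm : Fin D → Matrix (Fin m) (Fin m) ℂ)
               (Rm : Fin D → Matrix (Fin n) (Fin n) ℂ),
        ∀ p q, K p q = ∑ i, Lm i p.1 q.1 * Rm i p.2 q.2)
    (hDΔ : (D : ℝ) * Δ ≤ 1 / 2) :
    ∃ (φL : Fin m → ℂ) (φR : Fin n → ℂ),
      (star (fun p : Fin m × Fin n => φL p.1 * φR p.2) ⬝ᵥ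
        (fun p : Fin m × Fin n => φL p.1 * φR p.2)) = 1 ∧
      1 / Real.sqrt (2 * D) ≤
        ‖star Γ ⬝ᵥ (fun p : Fin m × Fin n => φL p.1 * φR p.2)‖ := by
  classical
  obtain ⟨Lm, Rm, hK⟩ := hrank
  -- nonemptiness of the index types
  have hmn : Nonempty (Fin m × Fin n) := by
    by_contra h
    rw [not_nonempty_iff] at h
    rw [dotProduct] at hΓ
    simp [Finset.univ_eq_empty] at hΓ
  have hm : Nonempty (Fin m) := ⟨hmn.some.1⟩
  have hn : Nonempty (Fin n) := ⟨hmn.some.2⟩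
  -- D positive
  have hD0 : D ≠ 0 := by
    intro hD
    subst hD
    have hK0 : K = 0 := by ext p q; simpa using hK p q
    rw [hK0, Matrix.zero_mulVec] at hfix
    rw [← hfix] at hΓ
    simp [dotProduct] at hΓ
  have hDpos : (0:ℝ) < D := by exact_mod_cast Nat.pos_of_ne_zero hD0
  -- Γ as a Euclidean vector
  set Γ' : EuclideanSpace ℂ (Fin m × Fin n) := WithLp.toLp 2 Γ with hΓ'def
  have hΓinner : (inner ℂ Γ' Γ' : ℂ) = 1 := by rw [inner_eq]; exact hΓ
  have hΓnorm : ‖Γ'‖ = 1 := by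
    have h := norm_eq_sqrt_re_inner (𝕜 := ℂ) Γ'
    rw [hΓinner] at h
    simpa using h
  -- nontriviality for nonempty spheres
  haveI : Nontrivial (EuclideanSpace ℂ (Fin m)) := by
    refine ⟨EuclideanSpace.single (Classical.arbitrary (Fin m)) 1, 0, fun h => ?_⟩
    have := congrArg (fun v : EuclideanSpace ℂ (Fin m) => v (Classical.arbitrary (Fin m))) h
    simp [EuclideanSpace.single_apply] at this
  haveI : Nontrivial (EuclideanSpace ℂ (Fin n)) := by
    refine ⟨EuclideanSpace.single (Classical.arbitrary (Fin n)) 1, 0, fun h => ?_⟩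
    have := congrArg (fun v : EuclideanSpace ℂ (Fin n) => v (Classical.arbitrary (Fin n))) h
    simp [EuclideanSpace.single_apply] at this
  -- the compact set of product unit pairs
  set S : Set (EuclideanSpace ℂ (Fin m) × EuclideanSpace ℂ (Fin n)) :=
    (Metric.sphere 0 1) ×ˢ (Metric.sphere 0 1) with hSdef
  have hScomp : IsCompact S := (isCompact_sphere _ _).prod (isCompact_sphere _ _)
  have hSne : S.Nonempty :=
    (NormedSpace.sphere_nonempty.mpr zero_le_one).prod
      (NormedSpace.sphere_nonempty.mpr zero_le_one)
  set F : EuclideanSpace ℂ (Fin m) × EuclideanSpace ℂ (Fin n) → ℝ :=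
    fun z => ‖(inner ℂ Γ' (tp z.1 z.2) : ℂ)‖ with hFdef
  have hFcont : Continuous F := by
    apply Continuous.norm
    have htp : Continuous fun z : EuclideanSpace ℂ (Fin m) × EuclideanSpace ℂ (Fin n) =>
        tp z.1 z.2 := by
      have hpi : Continuous fun z : EuclideanSpace ℂ (Fin m) × EuclideanSpace ℂ (Fin n) =>
          (fun p : Fin m × Fin n => z.1 p.1 * z.2 p.2) := by
        refine continuous_pi fun p => Continuous.mul ?_ ?_
        · exact (EuclideanSpace.proj p.1).continuous.comp continuous_fst
        · exact (EuclideanSpace.proj p.2).continuous.comp continuous_snd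
      exact (PiLp.continuous_toLp 2 fun _ : Fin m × Fin n => ℂ).comp hpi
    exact (innerSL ℂ Γ').continuous.comp htp
  obtain ⟨z₀, hz₀S, hz₀max⟩ := hScomp.exists_isMaxOn hSne hFcont.continuousOn
  set μ : ℝ := F z₀ with hμdef
  set a : EuclideanSpace ℂ (Fin m) := z₀.1 with hadef
  set b : EuclideanSpace ℂ (Fin n) := z₀.2 with hbdef
  have ha1 : ‖a‖ = 1 := by
    have := hz₀S.1; rwa [mem_sphere_zero_iff_norm] at this
  have hb1 : ‖b‖ = 1 := by
    have := hz₀S.2; rwa [mem_sphere_zero_iff_norm] at this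
  have hμ0 : 0 ≤ μ := norm_nonneg _
  have hμmax : ∀ (x : EuclideanSpace ℂ (Fin m)) (y : EuclideanSpace ℂ (Fin n)),
      ‖x‖ = 1 → ‖y‖ = 1 → ‖(inner ℂ Γ' (tp x y) : ℂ)‖ ≤ μ := by
    intro x y hx hy
    have := isMaxOn_iff.mp hz₀max (x, y) (Set.mem_prod.mpr ⟨mem_sphere_zero_iff_norm.mpr hx,
      mem_sphere_zero_iff_norm.mpr hy⟩)
    exact this
  -- μ is positive
  have hμpos : 0 < μ := by
    obtain ⟨p0, hp0⟩ : ∃ p, Γ p ≠ 0 := by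
      by_contra h
      push_neg at h
      rw [dotProduct] at hΓ
      simp [hΓ'def, h] at hΓ
    have h2 : (inner ℂ Γ' (tp (EuclideanSpace.single p0.1 1)
        (EuclideanSpace.single p0.2 1)) : ℂ) = (starRingEnd ℂ) (Γ p0) := by
      simp only [PiLp.inner_apply, RCLike.inner_apply, tp_apply,
        EuclideanSpace.single_apply, Fintype.sum_prod_type, mul_ite, ite_mul,
        mul_one, mul_zero, zero_mul, one_mul, Finset.sum_ite_eq',
        Finset.mem_univ, if_pos, Prod.mk.eta]
      rfl
    have h1 := hμmax (EuclideanSpace.single p0.1 1) (EuclideanSpace.single p0.2 1)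
      (by rw [EuclideanSpace.norm_single]; simp) (by rw [EuclideanSpace.norm_single]; simp)
    rw [h2] at h1
    have : (0:ℝ) < ‖(starRingEnd ℂ) (Γ p0)‖ := by
      simp only [norm_pos_iff]
      exact fun hc => hp0 (by simpa using congrArg (starRingEnd ℂ) hc)
    linarith
  -- the decomposition φ = c • Γ' + v
  set φ : EuclideanSpace ℂ (Fin m × Fin n) := tp a b with hφdef
  set c : ℂ := inner ℂ Γ' φ with hcdef
  have hcabs : ‖c‖ = μ := rfl
  set v : EuclideanSpace ℂ (Fin m × Fin n) := φ - c • Γ' with hvdef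
  have hφeq : φ = c • Γ' + v := by rw [hvdef]; abel
  have hvinner : (inner ℂ Γ' v : ℂ) = 0 := by
    rw [hvdef, inner_sub_right, inner_smul_right, hΓinner, mul_one, ← hcdef, sub_self]
  have hvdot : star Γ ⬝ᵥ (v : Fin m × Fin n → ℂ) = 0 := by
    rw [← inner_eq Γ' v]; exact hvinner
  obtain ⟨horth, hsh⟩ := hshrink v hvdot
  -- norms
  have hφinner : (inner ℂ φ φ : ℂ) = 1 := by
    rw [hφdef, inner_tp, inner_self_eq_norm_sq_to_K, inner_self_eq_norm_sq_to_K,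
      ha1, hb1]
    norm_num
  have hφnorm : ‖φ‖ = 1 := by
    have h := norm_eq_sqrt_re_inner (𝕜 := ℂ) φ
    rw [hφinner] at h
    simpa using h
  have hvnorm : ‖v‖ ^ 2 ≤ 1 := by
    have hcross : (inner ℂ (c • Γ') v : ℂ) = 0 := by
      rw [inner_smul_left, hvinner, mul_zero]
    have h := norm_add_sq (𝕜 := ℂ) (c • Γ') v
    rw [← hφeq, hcross] at h
    simp only [map_zero, mul_zero, add_zero] at h
    rw [hφnorm] at h
    nlinarith [norm_nonneg (c • Γ'), sq_nonneg ‖c • Γ'‖]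
  -- dotProduct norms to Euclidean norms
  have hdotnorm : ∀ x : EuclideanSpace ℂ (Fin m × Fin n),
      (star (x : Fin m × Fin n → ℂ) ⬝ᵥ (x : Fin m × Fin n → ℂ)).re = ‖x‖ ^ 2 := by
    intro x
    rw [← inner_eq x x]
    simpa using inner_self_eq_norm_sq (𝕜 := ℂ) x
  -- K applied
  set Kv : EuclideanSpace ℂ (Fin m × Fin n) := WithLp.toLp 2 (K.mulVec v) with hKvdef
  have hKvnorm : ‖Kv‖ ^ 2 ≤ Δ := by
    have h1 := hsh
    rw [hdotnorm Kv, hdotnorm v] at h1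
    calc ‖Kv‖ ^ 2 ≤ Δ * ‖v‖ ^ 2 := h1
      _ ≤ Δ * 1 := mul_le_mul_of_nonneg_left hvnorm hΔ
      _ = Δ := mul_one Δ
  set Kφ : EuclideanSpace ℂ (Fin m × Fin n) := WithLp.toLp 2 (K.mulVec φ) with hKφdef
  have hKφeq : Kφ = c • Γ' + Kv := by
    rw [hKφdef, hφeq, WithLp.ofLp_add, WithLp.ofLp_smul, Matrix.mulVec_add, Matrix.mulVec_smul,
      hΓ'def, WithLp.ofLp_toLp, hfix, hKvdef]
    rfl
  have hKvinner : (inner ℂ Γ' Kv : ℂ) = 0 := by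
    rw [inner_eq]; exact horth
  have hKφinner : (inner ℂ Γ' Kφ : ℂ) = c := by
    rw [hKφeq, inner_add_right, inner_smul_right, hΓinner, mul_one, hKvinner, add_zero]
  have hKφnorm : ‖Kφ‖ ^ 2 ≤ μ ^ 2 + Δ := by
    have hcross : (inner ℂ (c • Γ') Kv : ℂ) = 0 := by
      rw [inner_smul_left, hKvinner, mul_zero]
    have h := norm_add_sq (𝕜 := ℂ) (c • Γ') Kv
    rw [← hKφeq, hcross] at h
    simp only [map_zero, mul_zero, add_zero] at h
    have hcn : ‖c • Γ'‖ = μ := by rw [norm_smul, hΓnorm, mul_one, hcabs]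
    rw [hcn] at h
    linarith [hKvnorm]
  -- Kφ is a sum of D product vectors
  have hKφsum : Kφ = ∑ i, tp (WithLp.toLp 2 fun q => (Lm i).mulVec a q) (WithLp.toLp 2 fun q => (Rm i).mulVec b q) := by
    ext p
    rw [esum_apply]
    show ∑ q, K p q * φ q = _
    have : ∀ q : Fin m × Fin n, K p q * φ q
        = ∑ i, (Lm i p.1 q.1 * a q.1) * (Rm i p.2 q.2 * b q.2) := by
      intro q
      rw [hK p q, Finset.sum_mul]
      exact Finset.sum_congr rfl fun i _ => by
        show Lm i p.1 q.1 * Rm i p.2 q.2 * (a q.1 * b q.2) = _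
        ring
    simp_rw [this]
    rw [Finset.sum_comm]
    refine Finset.sum_congr rfl fun i _ => ?_
    rw [tp_apply]
    show _ = (∑ q1, Lm i p.1 q1 * a q1) * (∑ q2, Rm i p.2 q2 * b q2)
    rw [Finset.sum_mul_sum, Fintype.sum_prod_type]
  -- key bound
  have hkey := key_bound D Γ' μ hμ0 hμmax
    (fun i => (WithLp.toLp 2 fun q => (Lm i).mulVec a q)) (fun i => (WithLp.toLp 2 fun q => (Rm i).mulVec b q))
  rw [← hKφsum, hKφinner, hcabs] at hkey
  -- final arithmetic
  clear_value μ a b φ c v Kv Kφ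
  set s : ℝ := Real.sqrt D with hs
  have hs0 : 0 ≤ s := Real.sqrt_nonneg _
  have hssq : s ^ 2 = D := Real.sq_sqrt (Nat.cast_nonneg D)
  have hKφn0 : 0 ≤ ‖Kφ‖ := norm_nonneg _
  generalize htt : ‖Kφ‖ = t at hkey hKφnorm hKφn0
  have h4 : 1 / (2 * (D:ℝ)) ≤ μ ^ 2 :=
    agsp_arith D Δ μ t s hΔ hDΔ hDpos hμpos hssq hs0 hKφn0 hkey hKφnorm
  have h5 : 1 / Real.sqrt (2 * D) ≤ μ := by
    rw [one_div, ← Real.sqrt_inv]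
    calc Real.sqrt (2 * (D:ℝ))⁻¹ = Real.sqrt (1 / (2 * (D:ℝ))) := by rw [one_div]
      _ ≤ Real.sqrt (μ ^ 2) := Real.sqrt_le_sqrt h4
      _ = μ := Real.sqrt_sq hμ0
  refine ⟨a, b, ?_, ?_⟩
  · rw [hφdef] at hφinner
    rw [inner_eq] at hφinner
    exact hφinner
  · show 1 / Real.sqrt (2 * (D:ℝ)) ≤ ‖star (Γ' : Fin m × Fin n → ℂ) ⬝ᵥ ((tp a b : EuclideanSpace ℂ (Fin m × Fin n)) : Fin m × Fin n → ℂ)‖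
    rw [← inner_eq]
    rw [← hφdef, ← hcdef, hcabs]
    exact h5
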